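/- Let P be a finite stochastic matrix with Cesàro limit P_*. Then the matrix I - P + P_* is invertible. -/

import Mathlib

open Matrix Filter Finset

/-- A row-stochastic matrix: nonnegative entries and rows summing to 1. -/
def IsStochastic {n : Type*} [Fintype n] (P : Matrix n n ℝ) : Prop :=
  (∀ i j, 0 ≤ P i j) ∧ ∀ i, ∑ j, P i j = 1

/-- `Pstar` is the Cesàro limit of the powers of `P`. -/
def CesaroLimit {n : Type*} [Fintype n] [DecidableEq n] (P Pstar : Matrix n n ℝ) : Prop :=
  Filter.Tendsto (fun H : ℕ => (H : ℝ)⁻¹ • ∑ i ∈ Finset.range H, P ^ i)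
    Filter.atTop (nhds Pstar)

lemma isStochastic_mul {n : Type*} [Fintype n] {P Q : Matrix n n ℝ}
    (hP : IsStochastic P) (hQ : IsStochastic Q) : IsStochastic (P * Q) := by
  constructor
  · intro i j
    exact Finset.sum_nonneg fun k _ => mul_nonneg (hP.1 i k) (hQ.1 k j)
  · intro i
    simp only [Matrix.mul_apply]
    rw [Finset.sum_comm]
    calc ∑ k, ∑ j, P i k * Q k j = ∑ k, P i k * ∑ j, Q k j := by
          simp [Finset.mul_sum]
      _ = 1 := by simp [hQ.2, hP.2 i]

lemma isStochastic_pow {n : Type*} [Fintype n] [DecidableEq n] {P : Matrix n n ℝ}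
    (hP : IsStochastic P) (k : ℕ) : IsStochastic (P ^ k) := by
  induction k with
  | zero => exact ⟨fun i j => by simp [Matrix.one_apply]; positivity,
      fun i => by simp [Matrix.one_apply]⟩
  | succ m ih => rw [pow_succ]; exact isStochastic_mul ih hP

lemma sum_mulVec' {n : Type*} [Fintype n] {ι : Type*} (s : Finset ι)
    (M : ι → Matrix n n ℝ) (x : n → ℝ) :
    (∑ i ∈ s, M i) *ᵥ x = ∑ i ∈ s, M i *ᵥ x := by
  induction s using Finset.cons_induction with
  | empty => simp
  | cons a s ha ih => simp [Matrix.add_mulVec, ih]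

lemma entry_le_one {n : Type*} [Fintype n] {P : Matrix n n ℝ}
    (hP : IsStochastic P) (i j : n) : P i j ≤ 1 := by
  calc P i j ≤ ∑ k, P i k :=
        Finset.single_le_sum (fun k _ => hP.1 i k) (Finset.mem_univ j)
    _ = 1 := hP.2 i

theorem cesaro_unit {n : Type*} [Fintype n] [DecidableEq n]
    (P Pstar : Matrix n n ℝ) (hP : IsStochastic P) (hC : CesaroLimit P Pstar) :
    IsUnit (1 - P + Pstar) := by
  set A : ℕ → Matrix n n ℝ := fun H => (H : ℝ)⁻¹ • ∑ i ∈ Finset.range H, P ^ i with hA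
  -- (1/H) • P^H → 0
  have hpow0 : Tendsto (fun H : ℕ => (H : ℝ)⁻¹ • P ^ H) atTop (nhds (0 : Matrix n n ℝ)) := by
    refine tendsto_pi_nhds.mpr ?_
    intro i
    rw [tendsto_pi_nhds]
    intro j
    have : ∀ H : ℕ, |((H : ℝ)⁻¹ • P ^ H) i j| ≤ (H : ℝ)⁻¹ := by
      intro H
      have h1 := (isStochastic_pow hP H).1 i j
      have h2 := entry_le_one (isStochastic_pow hP H) i j
      simp only [Matrix.smul_apply, smul_eq_mul, abs_mul]
      rw [abs_of_nonneg (by positivity), abs_of_nonneg h1]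
      calc (H : ℝ)⁻¹ * (P ^ H) i j ≤ (H : ℝ)⁻¹ * 1 := by
            apply mul_le_mul_of_nonneg_left h2 (by positivity)
        _ = (H : ℝ)⁻¹ := by ring
    have key : Tendsto (fun H : ℕ => (H : ℝ)⁻¹) atTop (nhds 0) :=
      tendsto_inv_atTop_zero.comp tendsto_natCast_atTop_atTop
    exact squeeze_zero_norm this key
  -- Pstar * P = Pstar
  have hPsP : Pstar * P = Pstar := by
    have heq : ∀ H : ℕ, A H * P = A H - (H : ℝ)⁻¹ • (1 : Matrix n n ℝ) + (H : ℝ)⁻¹ • P ^ H := by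
      intro H
      have : (∑ i ∈ Finset.range H, P ^ i) * P
          = (∑ i ∈ Finset.range H, P ^ i) - 1 + P ^ H := by
        rw [Finset.sum_mul]
        have hstep : ∀ i, P ^ i * P = P ^ (i + 1) := fun i => (pow_succ P i).symm
        simp_rw [hstep]
        have e1 := Finset.sum_range_succ' (fun i => P ^ i) H
        have e2 := Finset.sum_range_succ (fun i => P ^ i) H
        simp only [pow_zero] at e1
        have : ∑ x ∈ Finset.range H, P ^ (x + 1)
            = ∑ i ∈ Finset.range (H + 1), P ^ i - 1 := by
          rw [e1]; abel
        rw [this, e2]; abel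
      rw [hA]
      simp only [Matrix.smul_mul, this, smul_sub, smul_add]
    have h1 : Tendsto (fun H => A H * P) atTop (nhds (Pstar * P)) :=
      ((continuous_id.matrix_mul continuous_const).tendsto Pstar).comp hC
    have h2 : Tendsto (fun H => A H - (H : ℝ)⁻¹ • (1 : Matrix n n ℝ) + (H : ℝ)⁻¹ • P ^ H)
        atTop (nhds (Pstar - 0 + 0)) := by
      apply Tendsto.add _ hpow0
      apply hC.sub
      have key : Tendsto (fun H : ℕ => (H : ℝ)⁻¹) atTop (nhds 0) :=
        tendsto_inv_atTop_zero.comp tendsto_natCast_atTop_atTop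
      have := key.smul_const (1 : Matrix n n ℝ)
      simpa using this
    rw [show Pstar - 0 + 0 = Pstar by abel] at h2
    exact tendsto_nhds_unique (by simpa only [heq] using h1) h2
  -- Pstar * P^i = Pstar
  have hPsPi : ∀ i : ℕ, Pstar * P ^ i = Pstar := by
    intro i
    induction i with
    | zero => simp
    | succ m ih => rw [pow_succ, ← mul_assoc, ih, hPsP]
  -- Pstar * Pstar = Pstar
  have hPs2 : Pstar * Pstar = Pstar := by
    have h1 : Tendsto (fun H => Pstar * A H) atTop (nhds (Pstar * Pstar)) :=
      ((continuous_const.matrix_mul continuous_id).tendsto Pstar).comp hC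
    have h2 : ∀ᶠ H : ℕ in atTop, Pstar * A H = Pstar := by
      filter_upwards [eventually_ge_atTop 1] with H hH
      rw [hA]
      simp only [Matrix.mul_smul, Finset.mul_sum, hPsPi, Finset.sum_const,
        Finset.card_range]
      rw [← Nat.cast_smul_eq_nsmul ℝ, smul_smul,
        inv_mul_cancel₀ (Nat.cast_ne_zero.mpr (by omega)), one_smul]
    exact tendsto_nhds_unique (h1.congr' h2) tendsto_const_nhds
  -- injectivity of mulVec
  rw [← Matrix.mulVec_injective_iff_isUnit]
  have hker : ∀ x : n → ℝ, (1 - P + Pstar) *ᵥ x = 0 → x = 0 := by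
    intro x hx
    have hPsx : Pstar *ᵥ x = 0 := by
      have : Pstar *ᵥ ((1 - P + Pstar) *ᵥ x) = (Pstar * (1 - P + Pstar)) *ᵥ x :=
        Matrix.mulVec_mulVec _ _ _
      rw [hx, Matrix.mulVec_zero] at this
      replace this := this.symm
      have hid : Pstar * (1 - P + Pstar) = Pstar := by
        rw [mul_add, mul_sub, mul_one, hPsP, hPs2]; abel
      rwa [hid] at this
    have hPx : P *ᵥ x = x := by
      have := hx
      rw [Matrix.add_mulVec, Matrix.sub_mulVec, Matrix.one_mulVec, hPsx] at this
      have h := this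
      -- x - P *ᵥ x + 0 = 0
      rw [add_zero, sub_eq_zero] at h
      exact h.symm
    have hPix : ∀ i : ℕ, (P ^ i) *ᵥ x = x := by
      intro i
      induction i with
      | zero => simp
      | succ m ih => rw [pow_succ', ← Matrix.mulVec_mulVec, ih, hPx]
    have h1 : Tendsto (fun H => A H *ᵥ x) atTop (nhds (Pstar *ᵥ x)) :=
      ((continuous_id.matrix_mulVec continuous_const).tendsto Pstar).comp hC
    have h2 : ∀ᶠ H : ℕ in atTop, A H *ᵥ x = x := by
      filter_upwards [eventually_ge_atTop 1] with H hH
      rw [hA]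
      rw [Matrix.smul_mulVec, sum_mulVec']
      simp only [hPix, Finset.sum_const, Finset.card_range]
      rw [← Nat.cast_smul_eq_nsmul ℝ, smul_smul,
        inv_mul_cancel₀ (Nat.cast_ne_zero.mpr (by omega)), one_smul]
    have := h1.congr' h2
    have hx0 := tendsto_nhds_unique this tendsto_const_nhds
    rw [hPsx] at hx0
    exact hx0.symm
  intro x y hxy
  have : (1 - P + Pstar) *ᵥ (x - y) = 0 := by
    rw [Matrix.mulVec_sub, hxy, sub_self]
  have := hker _ this
  exact sub_eq_zero.mp this
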